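/- Consider the bipartite graph G(U,V;E) with U = U1 ∪ U2, V = V1 ∪ V2, |U1|=|U2|=|V1|=|V2|=n/2, whose edges are a perfect matching between U1 and V1, a perfect matching between U2 and V2, and a complete bipartite graph between U1 and V2. For any permutation π of V, let S ⊆ V1 be the set of v ∈ V1 such that strictly more vertices of V2 than vertices of V1 precede v (inclusive of v counted on the V1 side) — formally, such that there exist |{v' ∈ V1 : π(v') ≤ π(v)}| distinct vertices of V2 with rank below π(v). Then there exists a permutation σ of U under which the greedy matching leaves every vertex of S unmatched; hence the greedy matching has size at most n - |S|. -/

import Mathlib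

/-- Auxiliary greedy process: process the list of left vertices in order; each is
matched to its unmatched neighbor of lowest rank under `π` (if any). -/
def greedyAux {U V : Type*} [Fintype V] [DecidableEq V] {n : ℕ}
    (E : U → V → Bool) (π : V ≃ Fin n) :
    List U → Finset V → List (U × V)
  | [], _ => []
  | u :: us, matched =>
    let cand := (Finset.univ.filter (fun v => E u v = true ∧ v ∉ matched)).image π
    if h : cand.Nonempty then
      (u, π.symm (cand.min' h)) :: greedyAux E π us (insert (π.symm (cand.min' h)) matched)
    else
      greedyAux E π us matched

/-- The greedy matching `M[σ,π]`: vertices of `U` arrive in the order given by `σ`,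
each matched to its lowest-ranked (under `π`) yet-unmatched neighbor. -/
def greedy {U V : Type*} [Fintype V] [DecidableEq V] {m n : ℕ}
    (E : U → V → Bool) (σ : U ≃ Fin m) (π : V ≃ Fin n) : List (U × V) :=
  greedyAux E π ((List.finRange m).map σ.symm) ∅


lemma greedyAux_cons {U V : Type*} [Fintype V] [DecidableEq V] {n : ℕ}
    (E : U → V → Bool) (π : V ≃ Fin n) (u : U) (us : List U) (matched : Finset V) :
    greedyAux E π (u :: us) matched =
      (if h : ((Finset.univ.filter (fun v => E u v = true ∧ v ∉ matched)).image π).Nonempty then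
        (u, π.symm (((Finset.univ.filter (fun v => E u v = true ∧ v ∉ matched)).image π).min' h)) ::
          greedyAux E π us (insert (π.symm (((Finset.univ.filter (fun v => E u v = true ∧ v ∉ matched)).image π).min' h)) matched)
      else greedyAux E π us matched) := rfl

lemma greedyAux_snd_mem {U V : Type*} [Fintype V] [DecidableEq V] {n : ℕ}
    (E : U → V → Bool) (π : V ≃ Fin n) (L : List U) (matched : Finset V) (v : V)
    (hv : v ∈ (greedyAux E π L matched).map Prod.snd) :
    ∃ u ∈ L, E u v = true := by
  induction L generalizing matched with
  | nil => simp [greedyAux] at hv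
  | cons u us ih =>
    rw [greedyAux_cons] at hv
    split_ifs at hv with h
    · rw [List.map_cons, List.mem_cons] at hv
      rcases hv with hv | hv
      · subst hv
        have := Finset.min'_mem _ h
        simp only [Finset.mem_image, Finset.mem_filter] at this
        obtain ⟨w, ⟨_, hw, _⟩, hπ⟩ := this
        refine ⟨u, List.mem_cons_self, ?_⟩
        have : π.symm (π w) = w := π.symm_apply_apply w
        rw [← hπ]
        simpa [this] using hw
      · obtain ⟨u', hu', he⟩ := ih _ hv
        exact ⟨u', List.mem_cons_of_mem _ hu', he⟩
    · obtain ⟨u', hu', he⟩ := ih _ hv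
      exact ⟨u', List.mem_cons_of_mem _ hu', he⟩

lemma greedyAux_snd_nodup {U V : Type*} [Fintype V] [DecidableEq V] {n : ℕ}
    (E : U → V → Bool) (π : V ≃ Fin n) (L : List U) (matched : Finset V) :
    ((greedyAux E π L matched).map Prod.snd).Nodup ∧
      ∀ v ∈ (greedyAux E π L matched).map Prod.snd, v ∉ matched := by
  induction L generalizing matched with
  | nil => simp [greedyAux]
  | cons u us ih =>
    rw [greedyAux_cons]
    split_ifs with h
    · set c := π.symm ((((Finset.univ.filter (fun v => E u v = true ∧ v ∉ matched))).image π).min' h) with hc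
      obtain ⟨hnd, hnm⟩ := ih (insert c matched)
      constructor
      · rw [List.map_cons, List.nodup_cons]
        exact ⟨fun hmem => (hnm c hmem) (Finset.mem_insert_self _ _), hnd⟩
      · intro v hv
        rw [List.map_cons, List.mem_cons] at hv
        rcases hv with rfl | hv
        · have := Finset.min'_mem _ h
          simp only [Finset.mem_image, Finset.mem_filter] at this
          obtain ⟨w, ⟨_, _, hw⟩, hπ⟩ := this
          rw [hc, ← hπ, π.symm_apply_apply]
          exact hw
        · exact fun hvm => hnm v hv (Finset.mem_insert_of_mem hvm)
    · exact ih matched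

lemma key {m : ℕ} (E : (Fin 2 × Fin m) → (Fin 2 × Fin m) → Bool)
    (hE : ∀ u v, E u v = true ↔ (u = v ∨ (u.1 = 0 ∧ v.1 = 1)))
    (π : (Fin 2 × Fin m) ≃ Fin (2 * m)) :
    ∀ (l L2 : List (Fin 2 × Fin m)) (j : ℕ) (matched : Finset (Fin 2 × Fin m)),
    (∀ u ∈ l, u.1 = 0) →
    l.Pairwise (fun a b => (π a : ℕ) < (π b : ℕ)) →
    (∀ u ∈ L2, u.1 = 1) →
    matched.card ≤ j →
    (∀ u ∈ l, j ≤ (Finset.univ.filter (fun v' : Fin 2 × Fin m =>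
        v'.1 = 0 ∧ (π v' : ℕ) < (π u : ℕ))).card) →
    ∀ v ∈ l,
    ((Finset.univ.filter (fun v' : Fin 2 × Fin m =>
        v'.1 = 0 ∧ (π v' : ℕ) ≤ (π v : ℕ))).card ≤
      (Finset.univ.filter (fun w : Fin 2 × Fin m =>
        w.1 = 1 ∧ (π w : ℕ) < (π v : ℕ))).card) →
    v ∉ (greedyAux E π (l ++ L2) matched).map Prod.snd := by
  intro l
  induction l with
  | nil => intro L2 j matched _ _ _ _ _ v hv; simp at hv
  | cons h t ih =>
    intro L2 j matched h01 hpw hL2 hcard hrank v hvmem hvS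
    have hh0 : h.1 = 0 := h01 h (List.mem_cons_self)
    have hpw' := (List.pairwise_cons.mp hpw)
    rcases List.mem_cons.mp hvmem with rfl | hvt
    · -- v is the head
      -- find an unmatched V2 vertex with lower rank
      set A := Finset.univ.filter (fun w : Fin 2 × Fin m =>
        w.1 = 1 ∧ (π w : ℕ) < (π v : ℕ)) with hA
      have hAcard : j + 1 ≤ A.card := by
        have h1 : (Finset.univ.filter (fun v' : Fin 2 × Fin m =>
            v'.1 = 0 ∧ (π v' : ℕ) < (π v : ℕ))).card + 1 ≤
            (Finset.univ.filter (fun v' : Fin 2 × Fin m =>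
            v'.1 = 0 ∧ (π v' : ℕ) ≤ (π v : ℕ))).card := by
          have hins : insert v (Finset.univ.filter (fun v' : Fin 2 × Fin m =>
              v'.1 = 0 ∧ (π v' : ℕ) < (π v : ℕ))) ⊆
              Finset.univ.filter (fun v' : Fin 2 × Fin m =>
              v'.1 = 0 ∧ (π v' : ℕ) ≤ (π v : ℕ)) := by
            intro x hx
            rcases Finset.mem_insert.mp hx with rfl | hx
            · simp [hh0]
            · simp only [Finset.mem_filter, Finset.mem_univ, true_and] at hx ⊢
              exact ⟨hx.1, le_of_lt hx.2⟩
          have hnot : v ∉ Finset.univ.filter (fun v' : Fin 2 × Fin m =>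
              v'.1 = 0 ∧ (π v' : ℕ) < (π v : ℕ)) := by simp
          calc _ = (insert v (Finset.univ.filter (fun v' : Fin 2 × Fin m =>
              v'.1 = 0 ∧ (π v' : ℕ) < (π v : ℕ)))).card := (Finset.card_insert_of_notMem hnot).symm
            _ ≤ _ := Finset.card_le_card hins
        have h2 := hrank v (List.mem_cons_self)
        omega
      have : ∃ w ∈ A, w ∉ matched := by
        by_contra hcon
        push_neg at hcon
        have : A ⊆ matched := hcon
        have := Finset.card_le_card this
        omega
      obtain ⟨w, hwA, hwm⟩ := this
      rw [hA, Finset.mem_filter] at hwA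
      obtain ⟨-, hw1, hwlt⟩ := hwA
      have hEhw : E v w = true := (hE v w).mpr (Or.inr ⟨hh0, hw1⟩)
      have hwcand : π w ∈ (Finset.univ.filter (fun x => E v x = true ∧ x ∉ matched)).image π := by
        exact Finset.mem_image_of_mem π (by simp [hEhw, hwm])
      have hne : ((Finset.univ.filter (fun x => E v x = true ∧ x ∉ matched)).image π).Nonempty :=
        ⟨π w, hwcand⟩
      rw [List.cons_append, greedyAux_cons, dif_pos hne]
      set c := π.symm ((((Finset.univ.filter (fun x => E v x = true ∧ x ∉ matched))).image π).min' hne) with hc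
      have hclt : ((π c : ℕ)) < (π v : ℕ) := by
        have hmin := Finset.min'_le _ _ hwcand
        have : π c = ((((Finset.univ.filter (fun x => E v x = true ∧ x ∉ matched))).image π).min' hne) := by
          rw [hc, π.apply_symm_apply]
        rw [this]
        exact lt_of_le_of_lt (by exact_mod_cast hmin) hwlt
      rw [List.map_cons, List.mem_cons]
      push_neg
      constructor
      · intro hvc
        have hvc' : v = c := hvc
        rw [hvc'] at hclt; omega
      · intro hmem
        obtain ⟨u, hu, hEu⟩ := greedyAux_snd_mem E π _ _ _ hmem
        rcases List.mem_append.mp hu with hu | hu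
        · rcases (hE u v).mp hEu with rfl | ⟨_, hv1⟩
          · have := hpw'.1 u hu; omega
          · rw [hh0] at hv1; exact absurd hv1 (by decide)
        · rcases (hE u v).mp hEu with rfl | ⟨_, hv1⟩
          · have := hL2 u hu; rw [hh0] at this; exact absurd this (by decide)
          · rw [hh0] at hv1; exact absurd hv1 (by decide)
    · -- v in the tail: recurse with j+1
      have hstep : ∀ u ∈ t, j + 1 ≤ (Finset.univ.filter (fun v' : Fin 2 × Fin m =>
          v'.1 = 0 ∧ (π v' : ℕ) < (π u : ℕ))).card := by
        intro u hu
        have hhu : (π h : ℕ) < (π u : ℕ) := hpw'.1 u hu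
        have hsub : insert h (Finset.univ.filter (fun v' : Fin 2 × Fin m =>
            v'.1 = 0 ∧ (π v' : ℕ) < (π h : ℕ))) ⊆
            Finset.univ.filter (fun v' : Fin 2 × Fin m =>
            v'.1 = 0 ∧ (π v' : ℕ) < (π u : ℕ)) := by
          intro x hx
          rcases Finset.mem_insert.mp hx with rfl | hx
          · simp only [Finset.mem_filter, Finset.mem_univ, true_and]
            exact ⟨hh0, hhu⟩
          · simp only [Finset.mem_filter, Finset.mem_univ, true_and] at hx ⊢
            exact ⟨hx.1, lt_trans hx.2 hhu⟩
        have hnot : h ∉ Finset.univ.filter (fun v' : Fin 2 × Fin m =>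
            v'.1 = 0 ∧ (π v' : ℕ) < (π h : ℕ)) := by simp
        have := Finset.card_le_card hsub
        rw [Finset.card_insert_of_notMem hnot] at this
        have := hrank h (List.mem_cons_self)
        omega
      rw [List.cons_append, greedyAux_cons]
      split_ifs with hne
      · rw [List.map_cons, List.mem_cons]
        push_neg
        constructor
        · intro hvc
          -- v = chosen c : but chosen c ∉ matched and E h c; c has .1 computed... 
          have hmin := Finset.min'_mem _ hne
          simp only [Finset.mem_image, Finset.mem_filter] at hmin
          obtain ⟨x, ⟨-, hx, -⟩, hπx⟩ := hmin
          have hxv : x = v := by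
            rw [hvc]; rw [← hπx, π.symm_apply_apply]
          rw [hxv] at hx
          rcases (hE h v).mp hx with heq | ⟨_, hv1⟩
          · rw [← heq] at hvt
            have := hpw'.1 h hvt; omega
          · have hv0 : v.1 = 0 := h01 v hvmem
            rw [hv0] at hv1; exact absurd hv1 (by decide)
        · apply ih L2 (j+1) _ (fun u hu => h01 u (List.mem_cons_of_mem _ hu)) hpw'.2 hL2 _ hstep v hvt hvS
          rw [Finset.card_insert_of_notMem]
          · omega
          · have hmin := Finset.min'_mem _ hne
            simp only [Finset.mem_image, Finset.mem_filter] at hmin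
            obtain ⟨x, ⟨-, -, hx⟩, hπx⟩ := hmin
            rw [← hπx, π.symm_apply_apply]
            exact hx
      · exact ih L2 (j+1) matched (fun u hu => h01 u (List.mem_cons_of_mem _ hu)) hpw'.2 hL2
          (by omega) hstep v hvt hvS

lemma list_to_equiv {m : ℕ} (L : List (Fin 2 × Fin m)) (hnd : L.Nodup)
    (hlen : L.length = 2 * m) :
    ∃ σ : (Fin 2 × Fin m) ≃ Fin (2 * m),
      (List.finRange (2 * m)).map σ.symm = L := by
  have hcard : Fintype.card (Fin 2 × Fin m) = 2 * m := by
    simp [Fintype.card_prod]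
  set f : Fin (2 * m) → (Fin 2 × Fin m) := fun i => L.get (Fin.cast hlen.symm i) with hf
  have hinj : Function.Injective f := by
    intro a b hab
    have := List.nodup_iff_injective_get.mp hnd hab
    exact Fin.cast_injective _ this
  have hbij : Function.Bijective f := by
    rw [Fintype.bijective_iff_injective_and_card]
    exact ⟨hinj, by simp [hcard]⟩
  refine ⟨(Equiv.ofBijective f hbij).symm, ?_⟩
  apply List.ext_getElem
  · simp [hlen]
  · intro i h1 h2
    simp [Equiv.ofBijective, hf, List.getElem_map, List.getElem_finRange]


/-- The bad graph for a random permutation: `U = V = Fin 2 × Fin m`, with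
`U1 = {0} × Fin m`, `U2 = {1} × Fin m` (similarly `V1`, `V2`); edges are the perfect
matchings `U1–V1`, `U2–V2` and the complete bipartite graph `U1–V2`. For any
ranking `π` of `V`, letting `S` be the set of `v ∈ V1` such that there are at least
`|{v' ∈ V1 : π(v') ≤ π(v)}|` vertices of `V2` with rank below `π(v)`, some arrival
order `σ` leaves every vertex of `S` unmatched, so the greedy matching has size at
most `n - |S|` (where `n = 2m`). -/
theorem random_perm_bad_graph (m : ℕ)
    (E : (Fin 2 × Fin m) → (Fin 2 × Fin m) → Bool)
    (hE : ∀ u v, E u v = true ↔ (u = v ∨ (u.1 = 0 ∧ v.1 = 1)))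
    (π : (Fin 2 × Fin m) ≃ Fin (2 * m))
    (S : Finset (Fin 2 × Fin m))
    (hS : S = Finset.univ.filter (fun v : Fin 2 × Fin m => v.1 = 0 ∧
      (Finset.univ.filter (fun v' : Fin 2 × Fin m =>
          v'.1 = 0 ∧ (π v' : ℕ) ≤ (π v : ℕ))).card ≤
      (Finset.univ.filter (fun w : Fin 2 × Fin m =>
          w.1 = 1 ∧ (π w : ℕ) < (π v : ℕ))).card)) :
    ∃ σ : (Fin 2 × Fin m) ≃ Fin (2 * m),
      (∀ v ∈ S, v ∉ (greedy E σ π).map Prod.snd) ∧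
      (greedy E σ π).length ≤ 2 * m - S.card := by
  classical
  set baseL : List (Fin 2 × Fin m) := (List.finRange (2 * m)).map π.symm with hbaseL
  set L1 : List (Fin 2 × Fin m) := baseL.filter (fun v => decide (v.1 = 0)) with hL1
  set L2 : List (Fin 2 × Fin m) := baseL.filter (fun v => decide (v.1 = 1)) with hL2
  set L : List (Fin 2 × Fin m) := L1 ++ L2 with hL
  have hbnd : baseL.Nodup := (List.nodup_finRange _).map π.symm.injective
  have hperm : L.Perm baseL := by
    have h2 : L2 = baseL.filter (fun v => !(decide (v.1 = 0))) := by
      apply List.filter_congr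
      intro x _
      have : ∀ y : Fin 2, (decide (y = 1)) = !(decide (y = 0)) := by decide
      exact this x.1
    rw [hL, h2]
    exact List.filter_append_perm _ _
  have hnd : L.Nodup := hperm.nodup_iff.mpr hbnd
  have hlen : L.length = 2 * m := by
    rw [hperm.length_eq, hbaseL, List.length_map, List.length_finRange]
  obtain ⟨σ, hσ⟩ := list_to_equiv L hnd hlen
  have hgreedy : greedy E σ π = greedyAux E π L ∅ := by
    rw [greedy, hσ]
  have hbpw : baseL.Pairwise (fun a b => (π a : ℕ) < (π b : ℕ)) := by
    rw [hbaseL, List.pairwise_map]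
    have := List.pairwise_lt_finRange (2 * m)
    exact this.imp (fun hab => by simpa using hab)
  have hpw1 : L1.Pairwise (fun a b => (π a : ℕ) < (π b : ℕ)) :=
    hbpw.sublist (List.filter_sublist)
  have h01 : ∀ u ∈ L1, u.1 = 0 := by
    intro u hu
    rw [hL1, List.mem_filter] at hu
    exact of_decide_eq_true hu.2
  have h12 : ∀ u ∈ L2, u.1 = 1 := by
    intro u hu
    rw [hL2, List.mem_filter] at hu
    exact of_decide_eq_true hu.2
  have hmem1 : ∀ v : Fin 2 × Fin m, v.1 = 0 → v ∈ L1 := by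
    intro v hv
    rw [hL1, List.mem_filter]
    constructor
    · rw [hbaseL, List.mem_map]
      exact ⟨π v, List.mem_finRange _, π.symm_apply_apply v⟩
    · exact decide_eq_true hv
  have hmain : ∀ v ∈ S, v ∉ (greedy E σ π).map Prod.snd := by
    intro v hv
    rw [hS, Finset.mem_filter] at hv
    obtain ⟨-, hv0, hvS⟩ := hv
    rw [hgreedy, hL]
    exact key E hE π L1 L2 0 ∅ h01 hpw1 h12 (by simp) (fun u _ => Nat.zero_le _)
      v (hmem1 v hv0) hvS
  refine ⟨σ, hmain, ?_⟩
  obtain ⟨hsnd_nd, -⟩ := greedyAux_snd_nodup E π L ∅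
  rw [← hgreedy] at hsnd_nd
  have hlen2 : (greedy E σ π).length = ((greedy E σ π).map Prod.snd).length := by
    rw [List.length_map]
  rw [hlen2]
  have hsub : ((greedy E σ π).map Prod.snd).toFinset ⊆ Finset.univ \ S := by
    intro x hx
    rw [List.mem_toFinset] at hx
    rw [Finset.mem_sdiff]
    exact ⟨Finset.mem_univ _, fun hxS => hmain x hxS hx⟩
  have := Finset.card_le_card hsub
  rw [List.toFinset_card_of_nodup hsnd_nd] at this
  have hcard : (Finset.univ \ S).card = 2 * m - S.card := by
    rw [Finset.card_sdiff, Finset.inter_univ, Finset.card_univ]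
    simp [Fintype.card_prod]
  omega
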